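/- Let Γ be a group, H a complex Hilbert space, and π : Γ → U(H) a unitary representation (a group homomorphism into the unitary operators on H). Let G ⊆ H be a nonempty set of vectors such that the family (π(γ) g), indexed by pairs (γ,g) ∈ Γ × G, is minimal. Then for every γ ∈ Γ of infinite order, the unitary operator π(γ) is not reductive: there exists a closed subspace V ⊆ H with π(γ) V ⊆ V but π(γ)* V ⊄ V. -/

import Mathlib

open ContinuousLinearMap

/-- Let `π` be a unitary representation of a group `Γ` on a complex Hilbert space `H`, and
`G ⊆ H` a nonempty set such that the system `{π(γ) g : γ ∈ Γ, g ∈ G}` is minimal. Then for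
every `γ ∈ Γ` of infinite order, `π(γ)` is not reductive: it has a closed invariant subspace
that is not invariant under `π(γ)*`. -/
theorem stmt_16 {H : Type*} [NormedAddCommGroup H] [InnerProductSpace ℂ H] [CompleteSpace H]
    {Γ : Type*} [Group Γ] (π : Γ →* unitary (H →L[ℂ] H))
    (G : Set H) (hGne : G.Nonempty)
    (hmin : ∀ p₀ : Γ × ↥G, ((π p₀.1 : H →L[ℂ] H) (p₀.2 : H)) ∉
      (Submodule.span ℂ
        ((fun p : Γ × ↥G => (π p.1 : H →L[ℂ] H) (p.2 : H)) '' {p | p ≠ p₀})).topologicalClosure) :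
    ∀ γ : Γ, (∀ m : ℕ, 0 < m → γ ^ m ≠ 1) →
      ∃ V : Submodule ℂ H, IsClosed (V : Set H) ∧
        (∀ v ∈ V, (π γ : H →L[ℂ] H) v ∈ V) ∧
        ¬ (∀ v ∈ V, (adjoint (π γ : H →L[ℂ] H)) v ∈ V) := by
  intro γ hγ
  obtain ⟨g0, hg0⟩ := hGne
  set g : ↥G := ⟨g0, hg0⟩
  set a : H →L[ℂ] H := (π γ : H →L[ℂ] H) with ha
  set S : Set H := Set.range (fun n : ℕ => (π (γ ^ (n + 1)) : H →L[ℂ] H) (g : H)) with hS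
  set W : Submodule ℂ H := Submodule.span ℂ S with hW
  refine ⟨W.topologicalClosure, W.isClosed_topologicalClosure, ?_, ?_⟩
  · -- invariance under a
    intro v hv
    have hmaps : Set.MapsTo a (W : Set H) (W : Set H) := by
      intro w hw
      -- a maps W into W since a maps S into S
      have hSmap : ∀ s ∈ S, a s ∈ W := by
        rintro s ⟨n, rfl⟩
        apply Submodule.subset_span
        refine ⟨n + 1, ?_⟩
        have : γ * γ ^ (n + 1) = γ ^ (n + 1 + 1) := by
          group
        simp only [← this, map_mul]
        rfl
      have : Submodule.map (a : H →ₗ[ℂ] H) W ≤ W := by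
        rw [hW, Submodule.map_span, Submodule.span_le]
        rintro x ⟨s, hs, rfl⟩
        exact hSmap s hs
      exact this ⟨w, hw, rfl⟩
    have hv' : v ∈ closure (W : Set H) := by
      rwa [← Submodule.topologicalClosure_coe]
    have := map_mem_closure a.continuous hv' hmaps
    rwa [← Submodule.topologicalClosure_coe] at this
  · -- not invariant under adjoint
    intro hcontra
    have hUg : (π (γ ^ 1) : H →L[ℂ] H) (g : H) ∈ W.topologicalClosure := by
      apply Submodule.le_topologicalClosure
      exact Submodule.subset_span ⟨0, rfl⟩
    have hadj : adjoint a ((π (γ ^ 1) : H →L[ℂ] H) (g : H)) = (g : H) := by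
      have hst : star a * a = 1 := by
        have hmem := (π γ).prop
        rw [Unitary.mem_iff] at hmem
        exact hmem.1
      have h1 : (π (γ ^ 1) : H →L[ℂ] H) (g : H) = a (g : H) := by
        simp [ha]
      rw [h1, ← ContinuousLinearMap.star_eq_adjoint, ← ContinuousLinearMap.mul_apply, hst,
        ContinuousLinearMap.one_apply]
    have hgV : (g : H) ∈ W.topologicalClosure := by
      rw [← hadj]; exact hcontra _ hUg
    -- contradiction with minimality at p₀ = (1, g)
    apply hmin (1, g)
    have hle : W.topologicalClosure ≤
        (Submodule.span ℂ
          ((fun p : Γ × ↥G => (π p.1 : H →L[ℂ] H) (p.2 : H)) '' {p | p ≠ (1, g)})).topologicalClosure := by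
      apply Submodule.topologicalClosure_mono
      rw [hW, Submodule.span_le]
      rintro x ⟨n, rfl⟩
      apply Submodule.subset_span
      refine ⟨(γ ^ (n + 1), g), ?_, rfl⟩
      simp only [Set.mem_setOf_eq]
      intro h
      exact hγ (n + 1) (Nat.succ_pos n) (congrArg Prod.fst h)
    have h1 : ((π (1 : Γ) : H →L[ℂ] H) (g : H)) = (g : H) := by
      rw [map_one π]
      rfl
    rw [h1]
    exact hle hgV
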